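/- Let {·_λ·} be a λ-bracket on A which is skewsymmetric and satisfies the PVA-Jacobi identity for all triples of elements of A. Then the induced bracket {∫f, ∫g} := ∫{f, g} makes the space of local functionals F into a Lie algebra over ℂ: it is well defined, skewsymmetric (∫{g,f} = −∫{f,g}), and satisfies the Jacobi identity. -/

import Mathlib

open MvPolynomial

namespace MPVA

/-- The algebra of difference polynomials in `ℓ` generators on a `D`-dimensional lattice:
polynomials over `ℂ` in the variables `u^i_N`, `i ∈ Fin ℓ`, `N ∈ ℤ^D`. -/
abbrev A (ℓ D : ℕ) := MvPolynomial (Fin ℓ × (Fin D → ℤ)) ℂ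

variable {ℓ D : ℕ}

/-- The shift automorphism `S^M` sending `u^i_N` to `u^i_{N+M}`. -/
noncomputable def Sh (M : Fin D → ℤ) : A ℓ D ≃ₐ[ℂ] A ℓ D :=
  renameEquiv ℂ ((Equiv.refl (Fin ℓ)).prodCongr (Equiv.addRight M))

/-- The `α`-th standard basis vector `E_α ∈ ℤ^D`. -/
def E (α : Fin D) : Fin D → ℤ := fun β => if β = α then 1 else 0

/-- Membership in `(S₁−1)A + ⋯ + (S_D−1)A` (so `∫x = 0` in the space of local
functionals `F = A/((S₁−1)A + ⋯ + (S_D−1)A)`). -/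
def InShiftIdeal (x : A ℓ D) : Prop :=
  ∃ h : Fin D → A ℓ D, x = ∑ α : Fin D, (Sh (E α) (h α) - h α)

/-- A λ-bracket on `A`, presented through its coefficients: `{f_λ g} = Σ_T (B T f g)·λ^T`. -/
structure IsLambdaBracket (B : (Fin D → ℤ) → A ℓ D → A ℓ D → A ℓ D) : Prop where
  add_left : ∀ (T : Fin D → ℤ) (f₁ f₂ g : A ℓ D), B T (f₁ + f₂) g = B T f₁ g + B T f₂ g
  smul_left : ∀ (T : Fin D → ℤ) (c : ℂ) (f g : A ℓ D), B T (c • f) g = c • B T f g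
  add_right : ∀ (T : Fin D → ℤ) (f g₁ g₂ : A ℓ D), B T f (g₁ + g₂) = B T f g₁ + B T f g₂
  smul_right : ∀ (T : Fin D → ℤ) (c : ℂ) (f g : A ℓ D), B T f (c • g) = c • B T f g
  finite : ∀ f g : A ℓ D, (Function.support fun T => B T f g).Finite
  sesqui_left : ∀ (T : Fin D → ℤ) (α : Fin D) (f g : A ℓ D),
    B T (Sh (E α) f) g = B (T + E α) f g
  sesqui_right : ∀ (T : Fin D → ℤ) (α : Fin D) (f g : A ℓ D),
    B T f (Sh (E α) g) = Sh (E α) (B (T - E α) f g)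
  leibniz_left : ∀ (T : Fin D → ℤ) (f g h : A ℓ D),
    B T f (g * h) = B T f g * h + B T f h * g
  leibniz_right : ∀ (T : Fin D → ℤ) (f g h : A ℓ D),
    B T (f * g) h = B T f h * Sh T g + B T g h * Sh T f

/-- Skewsymmetry of the λ-bracket: `B_{−T}(g,f) = −S^{−T}(B_T(f,g))`. -/
def IsSkew (B : (Fin D → ℤ) → A ℓ D → A ℓ D → A ℓ D) : Prop :=
  ∀ (f g : A ℓ D) (T : Fin D → ℤ), B (-T) g f = - Sh (-T) (B T f g)

/-- The PVA-Jacobi identity, coefficient-wise in `λ^T μ^U`. -/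
def IsJacobi (B : (Fin D → ℤ) → A ℓ D → A ℓ D → A ℓ D) : Prop :=
  ∀ (f g h : A ℓ D) (T U : Fin D → ℤ),
    B T f (B U g h) - B U g (B T f h) = B U (B (T - U) f g) h

/-- The bracket `{f,g} := {f_λ g}|_{λ=1} = Σ_T B_T(f,g)`. -/
noncomputable def br (B : (Fin D → ℤ) → A ℓ D → A ℓ D → A ℓ D) (f g : A ℓ D) : A ℓ D :=
  ∑ᶠ T : Fin D → ℤ, B T f g

lemma Sh_apply (M : Fin D → ℤ) (x : A ℓ D) :
    Sh M x = rename (fun p : Fin ℓ × (Fin D → ℤ) => (p.1, p.2 + M)) x := rfl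

lemma Sh_Sh (M N : Fin D → ℤ) (x : A ℓ D) : Sh M (Sh N x) = Sh (N + M) x := by
  rw [Sh_apply, Sh_apply, rename_rename, Sh_apply]
  have h : ((fun p : Fin ℓ × (Fin D → ℤ) => (p.1, p.2 + M)) ∘ fun p => (p.1, p.2 + N))
      = fun p : Fin ℓ × (Fin D → ℤ) => (p.1, p.2 + (N + M)) := by
    funext p; simp [Function.comp, add_assoc]
  rw [h]

lemma Sh_zero (x : A ℓ D) : Sh (0 : Fin D → ℤ) x = x := by
  rw [Sh_apply]
  have h : (fun p : Fin ℓ × (Fin D → ℤ) => (p.1, p.2 + 0)) = id := by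
    funext p; simp
  rw [h, rename_id, AlgHom.id_apply]

lemma ISI_zero : InShiftIdeal (0 : A ℓ D) := ⟨0, by simp⟩

lemma ISI_add {x y : A ℓ D} (hx : InShiftIdeal x) (hy : InShiftIdeal y) :
    InShiftIdeal (x + y) := by
  obtain ⟨h1, rfl⟩ := hx; obtain ⟨h2, rfl⟩ := hy
  refine ⟨h1 + h2, ?_⟩
  rw [← Finset.sum_add_distrib]
  refine Finset.sum_congr rfl fun α _ => ?_
  simp only [Pi.add_apply, map_add]
  abel

lemma ISI_neg {x : A ℓ D} (hx : InShiftIdeal x) : InShiftIdeal (-x) := by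
  obtain ⟨h1, rfl⟩ := hx
  refine ⟨-h1, ?_⟩
  rw [← Finset.sum_neg_distrib]
  refine Finset.sum_congr rfl fun α _ => ?_
  simp only [Pi.neg_apply, map_neg]
  abel

lemma ISI_sum {ι : Type*} {s : Finset ι} {F : ι → A ℓ D}
    (h : ∀ i ∈ s, InShiftIdeal (F i)) : InShiftIdeal (∑ i ∈ s, F i) := by
  classical
  induction s using Finset.induction_on with
  | empty => simpa using ISI_zero
  | insert _ _ hnot ih =>
    rw [Finset.sum_insert hnot]
    exact ISI_add (h _ (Finset.mem_insert_self _ _))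
      (ih fun i hi => h i (Finset.mem_insert_of_mem hi))

lemma ISI_single (α : Fin D) (x : A ℓ D) : InShiftIdeal (Sh (E α) x - x) := by
  classical
  refine ⟨fun β => if β = α then x else 0, ?_⟩
  rw [Finset.sum_eq_single α]
  · simp
  · intro β _ hβ; simp [hβ]
  · intro hc; exact absurd (Finset.mem_univ α) hc

lemma ISI_shift (M : Fin D → ℤ) {x : A ℓ D} (hx : InShiftIdeal x) :
    InShiftIdeal (Sh M x) := by
  obtain ⟨h, rfl⟩ := hx
  refine ⟨fun α => Sh M (h α), ?_⟩
  rw [map_sum]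
  refine Finset.sum_congr rfl fun α _ => ?_
  simp only [map_sub, Sh_Sh]
  rw [add_comm]

lemma ISI_shift_sub_self (M : Fin D → ℤ) (x : A ℓ D) : InShiftIdeal (Sh M x - x) := by
  let G : AddSubgroup (Fin D → ℤ) :=
  { carrier := {N | ∀ y : A ℓ D, InShiftIdeal (Sh N y - y)}
    zero_mem' := fun y => by rw [Sh_zero, sub_self]; exact ISI_zero
    add_mem' := by
      intro N P hN hP y
      have heq : Sh (N + P) y - y = (Sh N (Sh P y) - Sh P y) + (Sh P y - y) := by
        rw [Sh_Sh, add_comm P N]; abel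
      rw [heq]; exact ISI_add (hN _) (hP _)
    neg_mem' := by
      intro N hN y
      have heq : Sh (-N) y - y = -(Sh N (Sh (-N) y) - Sh (-N) y) := by
        rw [Sh_Sh, neg_add_cancel, Sh_zero]; abel
      rw [heq]; exact ISI_neg (hN _) }
  have hM : M ∈ G := by
    have hrep : M = ∑ α : Fin D, M α • E α := by
      funext β
      simp [E, Finset.sum_apply, mul_ite]
    rw [hrep]
    exact AddSubgroup.sum_mem G fun α _ =>
      AddSubgroup.zsmul_mem G (fun y => ISI_single α y) (M α)
  exact hM x


section Bracket

variable {B : (Fin D → ℤ) → A ℓ D → A ℓ D → A ℓ D}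

lemma B_zero_right (hB : IsLambdaBracket B) (T : Fin D → ℤ) (f : A ℓ D) :
    B T f 0 = 0 := by
  have h := hB.smul_right T 0 f 0
  simpa using h

lemma B_zero_left (hB : IsLambdaBracket B) (T : Fin D → ℤ) (g : A ℓ D) :
    B T 0 g = 0 := by
  have h := hB.smul_left T 0 0 g
  simpa using h

lemma B_neg_left (hB : IsLambdaBracket B) (T : Fin D → ℤ) (f g : A ℓ D) :
    B T (-f) g = -B T f g := by
  have h := hB.smul_left T (-1) f g
  simpa using h

lemma B_neg_right (hB : IsLambdaBracket B) (T : Fin D → ℤ) (f g : A ℓ D) :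
    B T f (-g) = -B T f g := by
  have h := hB.smul_right T (-1) f g
  simpa using h

lemma B_sub_left (hB : IsLambdaBracket B) (T : Fin D → ℤ) (f f' g : A ℓ D) :
    B T (f - f') g = B T f g - B T f' g := by
  rw [sub_eq_add_neg, hB.add_left, B_neg_left hB, sub_eq_add_neg]

lemma B_sub_right (hB : IsLambdaBracket B) (T : Fin D → ℤ) (f g g' : A ℓ D) :
    B T f (g - g') = B T f g - B T f g' := by
  rw [sub_eq_add_neg, hB.add_right, B_neg_right hB, sub_eq_add_neg]

/-- `B T f ·` as an additive monoid hom. -/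
noncomputable def BRhom (hB : IsLambdaBracket B) (T : Fin D → ℤ) (f : A ℓ D) :
    A ℓ D →+ A ℓ D :=
  AddMonoidHom.mk' (B T f) (hB.add_right T f)

/-- `B T · g` as an additive monoid hom. -/
noncomputable def BLhom (hB : IsLambdaBracket B) (T : Fin D → ℤ) (g : A ℓ D) :
    A ℓ D →+ A ℓ D :=
  AddMonoidHom.mk' (fun f => B T f g) (fun a b => hB.add_left T a b g)

lemma br_add_left (hB : IsLambdaBracket B) (f f' g : A ℓ D) :
    br B (f + f') g = br B f g + br B f' g := by
  unfold br
  rw [← finsum_add_distrib (hB.finite f g) (hB.finite f' g)]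
  exact finsum_congr fun T => hB.add_left T f f' g

lemma br_neg_left (hB : IsLambdaBracket B) (f g : A ℓ D) :
    br B (-f) g = -br B f g := by
  unfold br
  rw [← finsum_neg_distrib]
  exact finsum_congr fun T => B_neg_left hB T f g

lemma br_sub_left (hB : IsLambdaBracket B) (f f' g : A ℓ D) :
    br B (f - f') g = br B f g - br B f' g := by
  rw [sub_eq_add_neg, br_add_left hB, br_neg_left hB, sub_eq_add_neg]

lemma br_add_right (hB : IsLambdaBracket B) (f g g' : A ℓ D) :
    br B f (g + g') = br B f g + br B f g' := by
  unfold br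
  rw [← finsum_add_distrib (hB.finite f g) (hB.finite f g')]
  exact finsum_congr fun T => hB.add_right T f g g'

lemma br_neg_right (hB : IsLambdaBracket B) (f g : A ℓ D) :
    br B f (-g) = -br B f g := by
  unfold br
  rw [← finsum_neg_distrib]
  exact finsum_congr fun T => B_neg_right hB T f g

lemma br_sub_right (hB : IsLambdaBracket B) (f g g' : A ℓ D) :
    br B f (g - g') = br B f g - br B f g' := by
  rw [sub_eq_add_neg, br_add_right hB, br_neg_right hB, sub_eq_add_neg]

lemma br_zero_left (hB : IsLambdaBracket B) (g : A ℓ D) : br B 0 g = 0 := by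
  unfold br
  rw [finsum_congr fun T => B_zero_left hB T g, finsum_zero]

lemma br_shift_left (hB : IsLambdaBracket B) (α : Fin D) (f g : A ℓ D) :
    br B (Sh (E α) f) g = br B f g := by
  unfold br
  rw [finsum_congr fun T => hB.sesqui_left T α f g]
  exact finsum_comp_equiv (Equiv.addRight (E α)) (f := fun T => B T f g)

lemma br_shift_right (hB : IsLambdaBracket B) (α : Fin D) (f g : A ℓ D) :
    br B f (Sh (E α) g) = Sh (E α) (br B f g) := by
  unfold br
  rw [finsum_congr fun T => hB.sesqui_right T α f g]
  have hfin : (Function.support fun T => B (T - E α) f g).Finite := by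
    refine Set.Finite.subset ((hB.finite f g).preimage
      ((Equiv.subRight (E α)).injective.injOn)) ?_
    intro T hT
    exact hT
  have hmap := (AddMonoidHom.mk' (Sh (E α) : A ℓ D → A ℓ D)
    (map_add (Sh (E α)))).map_finsum hfin (f := fun T => B (T - E α) f g)
  simp only [AddMonoidHom.mk'_apply] at hmap
  rw [← hmap]
  congr 1
  exact finsum_comp_equiv (Equiv.subRight (E α)) (f := fun S => B S f g)

end Bracket

lemma finsum_swap {ι κ M : Type*} [AddCommMonoid M] (f : ι → κ → M) {s : Finset κ}
    (hsupp : ∀ T, Function.support (f T) ⊆ (s : Set κ))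
    (hfin : ∀ U, (Function.support fun T => f T U).Finite) :
    ∑ᶠ T, ∑ᶠ U, f T U = ∑ᶠ U, ∑ᶠ T, f T U := by
  classical
  set t : Finset ι := s.biUnion fun U => (hfin U).toFinset with ht
  have hTeq : ∀ T, (∑ᶠ U, f T U) = ∑ U ∈ s, f T U := fun T =>
    finsum_eq_sum_of_support_subset _ (hsupp T)
  have houter : Function.support (fun T => ∑ᶠ U, f T U) ⊆ (t : Set ι) := by
    intro T hT'
    rw [Function.mem_support, hTeq T] at hT'
    obtain ⟨U, hU, hne⟩ := Finset.exists_ne_zero_of_sum_ne_zero hT'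
    exact Finset.mem_coe.2 (Finset.mem_biUnion.2 ⟨U, hU, (hfin U).mem_toFinset.2 hne⟩)
  have hrout : Function.support (fun U => ∑ᶠ T, f T U) ⊆ (s : Set κ) := by
    intro U hU
    rw [Function.mem_support] at hU
    by_contra hUs
    apply hU
    have : ∀ T, f T U = 0 := by
      intro T
      by_contra hne
      exact hUs (hsupp T hne)
    rw [finsum_congr this, finsum_zero]
  rw [finsum_eq_sum_of_support_subset _ houter, finsum_eq_sum_of_support_subset _ hrout]
  have hL : ∀ T ∈ t, (∑ᶠ U, f T U) = ∑ U ∈ s, f T U := fun T _ => hTeq T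
  have hR : ∀ U ∈ s, (∑ᶠ T, f T U) = ∑ T ∈ t, f T U := by
    intro U hU
    refine finsum_eq_sum_of_support_subset _ ?_
    intro T hT
    exact Finset.mem_coe.2 (Finset.mem_biUnion.2 ⟨U, hU, (hfin U).mem_toFinset.2 hT⟩)
  rw [Finset.sum_congr rfl hL, Finset.sum_congr rfl hR]
  exact Finset.sum_comm

/-- for a skewsymmetric λ-bracket satisfying the PVA-Jacobi identity,
the induced bracket `{∫f,∫g} := ∫{f,g}` makes the space of local functionals `F` into a
Lie algebra over ℂ: it is well defined, skewsymmetric (`∫{g,f} = −∫{f,g}`), and satisfies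
the Jacobi identity. -/
theorem functionals_lie_algebra (ℓ D : ℕ)
    (B : (Fin D → ℤ) → A ℓ D → A ℓ D → A ℓ D) (hB : IsLambdaBracket B)
    (hskew : IsSkew B) (hjac : IsJacobi B) :
    (∀ f f' g g' : A ℓ D, InShiftIdeal (f - f') → InShiftIdeal (g - g') →
      InShiftIdeal (br B f g - br B f' g')) ∧
    (∀ f g : A ℓ D, InShiftIdeal (br B g f + br B f g)) ∧
    (∀ f g h : A ℓ D,
      InShiftIdeal (br B f (br B g h) - br B g (br B f h) - br B (br B f g) h)) := by
  classical
  have br_left0 : ∀ {p : A ℓ D} (g : A ℓ D), InShiftIdeal p → br B p g = 0 := by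
    intro p g hp
    obtain ⟨h, rfl⟩ := hp
    have hs := map_sum (AddMonoidHom.mk' (fun f => br B f g)
      (fun a b => br_add_left hB a b g)) (fun α => Sh (E α) (h α) - h α) Finset.univ
    simp only [AddMonoidHom.mk'_apply] at hs
    rw [hs]
    refine Finset.sum_eq_zero fun α _ => ?_
    rw [br_sub_left hB, br_shift_left hB, sub_self]
  have br_right_isi : ∀ (f : A ℓ D) {q : A ℓ D}, InShiftIdeal q →
      InShiftIdeal (br B f q) := by
    intro f q hq
    obtain ⟨h, rfl⟩ := hq
    refine ⟨fun α => br B f (h α), ?_⟩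
    have hs := map_sum (AddMonoidHom.mk' (fun q => br B f q)
      (fun a b => br_add_right hB f a b)) (fun α => Sh (E α) (h α) - h α) Finset.univ
    simp only [AddMonoidHom.mk'_apply] at hs
    rw [hs]
    refine Finset.sum_congr rfl fun α _ => ?_
    rw [br_sub_right hB, br_shift_right hB]
  refine ⟨?_, ?_, ?_⟩
  · intro f f' g g' hf hg
    have key : br B f g - br B f' g' = br B (f - f') g + br B f' (g - g') := by
      rw [br_sub_left hB, br_sub_right hB]; abel
    rw [key, br_left0 g hf, zero_add]
    exact br_right_isi f' hg
  · intro f g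
    have h1 : br B g f = ∑ᶠ T, -Sh (-T) (B T f g) := by
      rw [show br B g f = ∑ᶠ T, B (-T) g f from
        (finsum_comp_equiv (Equiv.neg (Fin D → ℤ)) (f := fun T => B T g f)).symm]
      exact finsum_congr fun T => hskew f g T
    have hsup2 : (Function.support fun T => -Sh (-T) (B T f g)).Finite := by
      refine (hB.finite f g).subset ?_
      intro T hT
      simp only [Function.mem_support] at hT ⊢
      intro h0
      exact hT (by rw [h0, map_zero, neg_zero])
    have h2 : br B g f + br B f g = ∑ᶠ T, (-Sh (-T) (B T f g) + B T f g) := by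
      rw [h1]
      exact (finsum_add_distrib hsup2 (hB.finite f g)).symm
    rw [h2]
    have hsub : (Function.support fun T => -Sh (-T) (B T f g) + B T f g)
        ⊆ ((hB.finite f g).toFinset : Set (Fin D → ℤ)) := by
      intro T hT
      rw [Set.Finite.coe_toFinset]
      simp only [Function.mem_support] at hT ⊢
      intro h0
      exact hT (by rw [h0, map_zero, neg_zero, add_zero])
    rw [finsum_eq_sum_of_support_subset _ hsub]
    refine ISI_sum fun T _ => ?_
    have heq : -Sh (-T) (B T f g) + B T f g = -(Sh (-T) (B T f g) - B T f g) := by abel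
    rw [heq]
    exact ISI_neg (ISI_shift_sub_self (-T) (B T f g))
  · intro f g h
    have e1 : br B f (br B g h) = ∑ᶠ T, ∑ᶠ U, B T f (B U g h) := by
      refine finsum_congr fun T => ?_
      have := (BRhom hB T f).map_finsum (hB.finite g h) (f := fun U => B U g h)
      simpa [BRhom, br] using this
    have e3 : br B (br B f g) h
        = (∑ᶠ U, ∑ᶠ T, B T f (B U g h)) - br B g (br B f h) := by
      have step : ∀ U, B U (br B f g) h
          = (∑ᶠ T, B T f (B U g h)) - B U g (br B f h) := by
        intro U
        have s1 : B U (br B f g) h = ∑ᶠ S, B U (B S f g) h := by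
          have := (BLhom hB U h).map_finsum (hB.finite f g) (f := fun S => B S f g)
          simpa [BLhom, br] using this
        have s2 : (∑ᶠ S, B U (B S f g) h) = ∑ᶠ T, B U (B (T - U) f g) h :=
          (finsum_comp_equiv (Equiv.subRight U) (f := fun S => B U (B S f g) h)).symm
        have s3 : (∑ᶠ T, B U (B (T - U) f g) h)
            = ∑ᶠ T, (B T f (B U g h) - B U g (B T f h)) :=
          finsum_congr fun T => (hjac f g h T U).symm
        have hfa : (Function.support fun T => B T f (B U g h)).Finite :=
          hB.finite f (B U g h)
        have hfb : (Function.support fun T => B U g (B T f h)).Finite := by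
          refine (hB.finite f h).subset ?_
          intro T hT
          simp only [Function.mem_support] at hT ⊢
          intro h0
          exact hT (by rw [h0, B_zero_right hB])
        have s4 : (∑ᶠ T, (B T f (B U g h) - B U g (B T f h)))
            = (∑ᶠ T, B T f (B U g h)) - ∑ᶠ T, B U g (B T f h) :=
          finsum_sub_distrib hfa hfb
        have s5 : (∑ᶠ T, B U g (B T f h)) = B U g (br B f h) := by
          have := (BRhom hB U g).map_finsum (hB.finite f h) (f := fun T => B T f h)
          simpa [BRhom, br] using this.symm
        rw [s1, s2, s3, s4, s5]
      have hP : (Function.support fun U => ∑ᶠ T, B T f (B U g h)).Finite := by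
        refine (hB.finite g h).subset ?_
        intro U hU
        simp only [Function.mem_support] at hU ⊢
        intro h0
        refine hU ?_
        have hz : ∀ T, B T f (B U g h) = 0 := fun T => by rw [h0, B_zero_right hB]
        rw [finsum_congr hz, finsum_zero]
      have hQ : (Function.support fun U => B U g (br B f h)).Finite :=
        hB.finite g (br B f h)
      calc br B (br B f g) h = ∑ᶠ U, B U (br B f g) h := rfl
        _ = ∑ᶠ U, ((∑ᶠ T, B T f (B U g h)) - B U g (br B f h)) := finsum_congr step
        _ = (∑ᶠ U, ∑ᶠ T, B T f (B U g h)) - ∑ᶠ U, B U g (br B f h) :=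
            finsum_sub_distrib hP hQ
        _ = (∑ᶠ U, ∑ᶠ T, B T f (B U g h)) - br B g (br B f h) := rfl
    have hswap : (∑ᶠ T, ∑ᶠ U, B T f (B U g h)) = ∑ᶠ U, ∑ᶠ T, B T f (B U g h) := by
      refine finsum_swap (fun T U => B T f (B U g h)) (s := (hB.finite g h).toFinset)
        ?_ ?_
      · intro T U hU
        rw [Set.Finite.coe_toFinset]
        simp only [Function.mem_support] at hU ⊢
        intro h0
        exact hU (by rw [h0, B_zero_right hB])
      · intro U
        exact hB.finite f (B U g h)
    rw [e1, hswap, e3, sub_self]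
    exact ISI_zero

end MPVA
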